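/- With the setting of the generalized Fiedler–Bapat identity (Q symmetric PSD with ker(Q) = span(1), ζ := diagvec(Q†), Ω := 1ζᵀ + ζ1ᵀ − 2Q†, p := (1/2)Qζ + (1/n)1, σ² := (1/4)ζᵀQζ + (1/n)1ᵀζ), the following hold: 1ᵀp = 1, Ωp = 2σ²·1, and ΩQ = −2I + 2·1pᵀ. -/

import Mathlib

open Matrix Classical

/-- The Moore–Penrose pseudoinverse of a real matrix, defined via its four
characterizing Penrose equations (which have a unique solution). -/
noncomputable def pinv {m k : Type*} [Fintype m] [Fintype k]
    (A : Matrix m k ℝ) : Matrix k m ℝ :=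
  if h : ∃ X : Matrix k m ℝ,
      A * X * A = A ∧ X * A * X = X ∧ (A * X)ᵀ = A * X ∧ (X * A)ᵀ = X * A
  then h.choose else 0

theorem fiedler_bapat_relations
    {n : ℕ} (hn : 2 ≤ n) (Q : Matrix (Fin n) (Fin n) ℝ)
    (hQ : Q.PosSemidef)
    (hker : ∀ v : Fin n → ℝ, Q.mulVec v = 0 ↔ ∃ c : ℝ, v = fun _ => c)
    (ζ : Fin n → ℝ) (hζ : ζ = fun i => pinv Q i i)
    (Ω : Matrix (Fin n) (Fin n) ℝ)
    (hΩ : Ω = Matrix.of (fun _ j => ζ j) + Matrix.of (fun i _ => ζ i) - 2 • pinv Q)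
    (p : Fin n → ℝ)
    (hp : p = (1 / 2 : ℝ) • Q.mulVec ζ + (1 / (n : ℝ)) • ((fun _ => 1) : Fin n → ℝ))
    (σ2 : ℝ) (hσ2 : σ2 = (1 / 4) * (ζ ⬝ᵥ Q.mulVec ζ) + (1 / (n : ℝ)) * ∑ i, ζ i) :
    (∑ i, p i = 1) ∧
    Ω.mulVec p = (2 * σ2) • ((fun _ => 1) : Fin n → ℝ) ∧
    Ω * Q = (-2 : ℝ) • (1 : Matrix (Fin n) (Fin n) ℝ) + (2 : ℝ) • Matrix.of (fun _ j => p j) := by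
  have hnpos : (0:ℝ) < (n:ℝ) := by positivity
  have hn0 : (n : ℝ) ≠ 0 := ne_of_gt hnpos
  have hQsym : Qᵀ = Q := hQ.1
  have hQij : ∀ i j, Q i j = Q j i := fun i j => congrFun (congrFun hQsym j) i
  have hQ1 : Q *ᵥ (fun _ => (1:ℝ)) = 0 := (hker _).mpr ⟨1, rfl⟩
  have hQrowsum : ∀ i, ∑ j, Q i j = 0 := by
    intro i
    have := congrFun hQ1 i
    simpa [Matrix.mulVec, dotProduct] using this
  have hQcolsum : ∀ j, ∑ i, Q i j = 0 := by
    intro j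
    calc ∑ i, Q i j = ∑ i, Q j i := by
          exact Finset.sum_congr rfl fun i _ => hQij i j
    _ = 0 := hQrowsum j
  -- the all-ones matrix
  set J : Matrix (Fin n) (Fin n) ℝ := Matrix.of (fun _ _ => (1:ℝ)) with hJ
  have hQJ : Q * J = 0 := by
    ext i j
    simp [Matrix.mul_apply, hJ, hQrowsum i]
  have hJQ : J * Q = 0 := by
    ext i j
    simp [Matrix.mul_apply, hJ, hQcolsum j]
  have hJJ : J * J = (n : ℝ) • J := by
    ext i j
    simp [Matrix.mul_apply, hJ, Finset.sum_const, mul_comm]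
  -- M := Q + (1/n) J is positive definite
  set M : Matrix (Fin n) (Fin n) ℝ := Q + (n:ℝ)⁻¹ • J with hM
  have hJsymm : Jᵀ = J := by ext i j; simp [hJ]
  have hMsym : Mᵀ = M := by
    rw [hM, Matrix.transpose_add, hQsym, Matrix.transpose_smul, hJsymm]
  have hMpd : M.PosDef := by
    refine Matrix.PosDef.of_dotProduct_mulVec_pos ?_ ?_
    · simpa [Matrix.IsHermitian, Matrix.conjTranspose_eq_transpose_of_trivial] using hMsym
    · intro x hx
      have h1 : (0:ℝ) ≤ x ⬝ᵥ Q *ᵥ x := hQ.dotProduct_mulVec_nonneg x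
      have h2 : x ⬝ᵥ J *ᵥ x = (∑ i, x i) ^ 2 := by
        simp only [dotProduct, Matrix.mulVec, hJ, Matrix.of_apply, sq, Finset.sum_mul,
          Finset.mul_sum, mul_one, one_mul]
        exact Finset.sum_congr rfl fun i _ => Finset.sum_congr rfl fun j _ => mul_comm _ _
      have hMx : x ⬝ᵥ M *ᵥ x = x ⬝ᵥ Q *ᵥ x + (n:ℝ)⁻¹ * (∑ i, x i)^2 := by
        rw [hM, Matrix.add_mulVec, dotProduct_add, Matrix.smul_mulVec,
          dotProduct_smul, h2]
        rfl
      rw [show (star x : Fin n → ℝ) = x from rfl, hMx]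
      rcases lt_or_eq_of_le h1 with h | h
      · have : (0:ℝ) ≤ (n:ℝ)⁻¹ * (∑ i, x i)^2 := by positivity
        linarith
      · have hQx : Q *ᵥ x = 0 := by
          have := (hQ.dotProduct_mulVec_zero_iff x).mp (by simpa using h.symm)
          simpa using this
        obtain ⟨c, rfl⟩ := (hker x).mp hQx
        have hc : c ≠ 0 := by
          intro h0; apply hx; funext i; simp [h0]
        have hs : (∑ _i : Fin n, c) = (n:ℝ) * c := by simp [mul_comm]
        rw [← h, hs]
        have : (0:ℝ) < (n:ℝ)⁻¹ * ((n:ℝ)*c)^2 := by positivity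
        simpa using this
  have hMunit : IsUnit M.det := isUnit_iff_ne_zero.mpr hMpd.det_pos.ne'
  have hMM : M * M⁻¹ = 1 := Matrix.mul_nonsing_inv M hMunit
  have hMM' : M⁻¹ * M = 1 := Matrix.nonsing_inv_mul M hMunit
  have hMJ : M * J = J := by
    rw [hM, Matrix.add_mul, hQJ, Matrix.smul_mul, hJJ, smul_smul,
      inv_mul_cancel₀ hn0, one_smul, zero_add]
  have hJM : J * M = J := by
    rw [hM, Matrix.mul_add, hJQ, Matrix.mul_smul, hJJ, smul_smul,
      inv_mul_cancel₀ hn0, one_smul, zero_add]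
  have hMiJ : M⁻¹ * J = J := by
    calc M⁻¹ * J = M⁻¹ * (M * J) := by rw [hMJ]
    _ = J := by rw [← Matrix.mul_assoc, hMM', Matrix.one_mul]
  have hJMi : J * M⁻¹ = J := by
    calc J * M⁻¹ = (J * M) * M⁻¹ := by rw [hJM]
    _ = J := by rw [Matrix.mul_assoc, hMM, Matrix.mul_one]
  -- existence of the pseudoinverse of Q
  set X : Matrix (Fin n) (Fin n) ℝ := M⁻¹ - (n:ℝ)⁻¹ • J with hX
  have hQM : Q = M - (n:ℝ)⁻¹ • J := by rw [hM]; ring_nf; abel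
  have hQX : Q * X = 1 - (n:ℝ)⁻¹ • J := by
    calc Q * X = Q * M⁻¹ - (n:ℝ)⁻¹ • (Q * J) := by
          rw [hX, Matrix.mul_sub, Matrix.mul_smul]
    _ = (M - (n:ℝ)⁻¹ • J) * M⁻¹ := by rw [hQJ, ← hQM]; simp
    _ = 1 - (n:ℝ)⁻¹ • J := by
          rw [Matrix.sub_mul, hMM, Matrix.smul_mul, hJMi]
  have hXQ : X * Q = 1 - (n:ℝ)⁻¹ • J := by
    calc X * Q = M⁻¹ * Q - (n:ℝ)⁻¹ • (J * Q) := by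
          rw [hX, Matrix.sub_mul, Matrix.smul_mul]
    _ = M⁻¹ * (M - (n:ℝ)⁻¹ • J) := by rw [hJQ, ← hQM]; simp
    _ = 1 - (n:ℝ)⁻¹ • J := by
          rw [Matrix.mul_sub, hMM', Matrix.mul_smul, hMiJ]
  have hXJ : X * J = 0 := by
    rw [hX, Matrix.sub_mul, hMiJ, Matrix.smul_mul, hJJ, smul_smul,
      inv_mul_cancel₀ hn0, one_smul, sub_self]
  have hex : ∃ Y : Matrix (Fin n) (Fin n) ℝ,
      Q * Y * Q = Q ∧ Y * Q * Y = Y ∧ (Q * Y)ᵀ = Q * Y ∧ (Y * Q)ᵀ = Y * Q := by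
    have hJX : J * X = 0 := by
      rw [hX, Matrix.mul_sub, hJMi, Matrix.mul_smul, hJJ, smul_smul,
        inv_mul_cancel₀ hn0, one_smul, sub_self]
    refine ⟨X, ?_, ?_, ?_, ?_⟩
    · rw [hQX, Matrix.sub_mul, Matrix.one_mul, Matrix.smul_mul, hJQ, smul_zero, sub_zero]
    · rw [hXQ, Matrix.sub_mul, Matrix.one_mul, Matrix.smul_mul, hJX, smul_zero, sub_zero]
    · rw [hQX, Matrix.transpose_sub, Matrix.transpose_smul, hJsymm, Matrix.transpose_one]
    · rw [hXQ, Matrix.transpose_sub, Matrix.transpose_smul, hJsymm, Matrix.transpose_one]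
  have hPspec : Q * pinv Q * Q = Q ∧ pinv Q * Q * pinv Q = pinv Q ∧
      (Q * pinv Q)ᵀ = Q * pinv Q ∧ (pinv Q * Q)ᵀ = pinv Q * Q := by
    have h : pinv Q = hex.choose := by rw [pinv, dif_pos hex]
    rw [h]; exact hex.choose_spec
  set P : Matrix (Fin n) (Fin n) ℝ := pinv Q with hPdef
  obtain ⟨hP1', hP2', hP3', hP4'⟩ := hPspec
  -- P *ᵥ 1 = 0
  have hQP : Q * P = Pᵀ * Q := by
    conv_rhs => rw [← hQsym, ← Matrix.transpose_mul]
    rw [hP3']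
  have hPone : P *ᵥ (fun _ => (1:ℝ)) = 0 := by
    have h : P *ᵥ (fun _ => (1:ℝ)) = (P * (Q * P)) *ᵥ (fun _ => (1:ℝ)) := by
      rw [← Matrix.mul_assoc, hP2']
    rw [h, hQP, ← Matrix.mul_assoc, Matrix.mul_assoc, ← Matrix.mulVec_mulVec,
      ← Matrix.mulVec_mulVec, hQ1, Matrix.mulVec_zero, Matrix.mulVec_zero]
  -- P * Q = 1 - (1/n) J
  have hPQ : P * Q = 1 - (n:ℝ)⁻¹ • J := by
    set R : Matrix (Fin n) (Fin n) ℝ := 1 - (n:ℝ)⁻¹ • J - P * Q with hR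
    have hQR : Q * R = 0 := by
      rw [hR, Matrix.mul_sub, Matrix.mul_sub, Matrix.mul_one, Matrix.mul_smul, hQJ,
        smul_zero, sub_zero, ← Matrix.mul_assoc, hP1', sub_self]
    have hRsym : Rᵀ = R := by
      rw [hR, Matrix.transpose_sub, Matrix.transpose_sub, Matrix.transpose_smul,
        hJsymm, Matrix.transpose_one, hP4']
    have hRij : ∀ i j, R i j = R j i := fun i j => congrFun (congrFun hRsym j) i
    have hRone : R *ᵥ (fun _ => (1:ℝ)) = 0 := by
      rw [hR, Matrix.sub_mulVec, Matrix.sub_mulVec, ← Matrix.mulVec_mulVec, hQ1,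
        Matrix.mulVec_zero]
      ext i
      simp [Matrix.mulVec, dotProduct, hJ, Matrix.one_apply, Finset.sum_ite_eq,
        inv_mul_cancel₀ hn0, mul_inv_cancel₀ hn0]
    have hcol : ∀ j i i', R i j = R i' j := by
      intro j i i'
      have h0 : Q *ᵥ (fun k => R k j) = 0 := by
        ext i''
        have := congrFun (congrFun hQR i'') j
        simpa [Matrix.mul_apply, Matrix.mulVec, dotProduct] using this
      obtain ⟨c, hc⟩ := (hker _).mp h0
      have h1 := congrFun hc i
      have h2 := congrFun hc i'
      rw [h1, h2]
    have i0 : Fin n := ⟨0, by omega⟩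
    have hall : ∀ i j, R i j = R i0 i0 := by
      intro i j
      calc R i j = R i0 j := hcol j i i0
      _ = R j i0 := hRij i0 j
      _ = R i0 i0 := hcol i0 j i0
    have hzero : R i0 i0 = 0 := by
      have h := congrFun hRone i0
      simp only [Matrix.mulVec, dotProduct, mul_one, Pi.zero_apply] at h
      have h2 : ∑ j, R i0 j = ∑ _j : Fin n, R i0 i0 := by
        exact Finset.sum_congr rfl fun j _ => hall i0 j
      rw [h2, Finset.sum_const, Finset.card_univ, Fintype.card_fin] at h
      have : (n:ℝ) * R i0 i0 = 0 := by
        simpa [nsmul_eq_mul] using h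
      exact (mul_eq_zero.mp this).resolve_left hn0
    have hR0 : R = 0 := by
      ext i j
      rw [hall i j, hzero]
      rfl
    have : 1 - (n:ℝ)⁻¹ • J - P * Q = 0 := by rw [← hR, hR0]
    linear_combination (norm := noncomm_ring) -this
  -- key vector facts
  have hJv : ∀ v : Fin n → ℝ, J *ᵥ v = (∑ i, v i) • (fun _ => (1:ℝ)) := by
    intro v; ext i; simp [Matrix.mulVec, dotProduct, hJ]
  have hPQv : P *ᵥ (Q *ᵥ ζ) = ζ - ((n:ℝ)⁻¹ * ∑ i, ζ i) • (fun _ => (1:ℝ)) := by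
    rw [Matrix.mulVec_mulVec, hPQ, Matrix.sub_mulVec, Matrix.one_mulVec,
      Matrix.smul_mulVec, hJv, smul_smul]
  -- Goal 1
  have hsumQζ : ∑ i, (Q *ᵥ ζ) i = 0 := by
    simp only [Matrix.mulVec, dotProduct]
    rw [Finset.sum_comm]
    refine Finset.sum_eq_zero fun j _ => ?_
    rw [← Finset.sum_mul, hQcolsum j, zero_mul]
  have goal1 : ∑ i, p i = 1 := by
    rw [hp]
    simp only [Pi.add_apply, Pi.smul_apply, smul_eq_mul, Finset.sum_add_distrib,
      ← Finset.mul_sum, hsumQζ, mul_zero, zero_add, mul_one, Finset.sum_const,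
      Finset.card_univ, Fintype.card_fin, nsmul_eq_mul]
    field_simp
  -- Goal 2
  have hζp : ζ ⬝ᵥ p = (1/2) * (ζ ⬝ᵥ Q *ᵥ ζ) + (1/(n:ℝ)) * ∑ i, ζ i := by
    rw [hp, dotProduct_add, dotProduct_smul, dotProduct_smul]
    simp [dotProduct, smul_eq_mul, Finset.mul_sum]
  have hPp : P *ᵥ p = (1/2 : ℝ) • (ζ - ((n:ℝ)⁻¹ * ∑ i, ζ i) • (fun _ => (1:ℝ))) := by
    rw [hp, Matrix.mulVec_add, Matrix.mulVec_smul, Matrix.mulVec_smul, hPQv, hPone,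
      smul_zero, add_zero]
  have goal2 : Ω.mulVec p = (2 * σ2) • ((fun _ => 1) : Fin n → ℝ) := by
    rw [hΩ, Matrix.sub_mulVec, Matrix.add_mulVec]
    have hA1 : (Matrix.of (fun _ j => ζ j) : Matrix (Fin n) (Fin n) ℝ) *ᵥ p
        = (ζ ⬝ᵥ p) • (fun _ => (1:ℝ)) := by
      ext i; simp [Matrix.mulVec, dotProduct]
    have hA2 : (Matrix.of (fun i _ => ζ i) : Matrix (Fin n) (Fin n) ℝ) *ᵥ p = ζ := by
      ext i
      simp only [Matrix.mulVec, dotProduct, Matrix.of_apply]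
      rw [← Finset.mul_sum, goal1, mul_one]
    have h2P : (2 • P) *ᵥ p = 2 • (P *ᵥ p) := by
      rw [two_smul, two_smul, Matrix.add_mulVec]
    rw [hA1, hA2, h2P, hPp]
    ext i
    simp only [Pi.add_apply, Pi.sub_apply, Pi.smul_apply, smul_eq_mul, mul_one, hζp, hσ2]
    field_simp
    ring_nf
    field_simp
    ring
  refine ⟨goal1, goal2, ?_⟩
  -- Goal 3
  rw [hΩ, Matrix.sub_mul, Matrix.add_mul]
  have h2PQ : (2 • P) * Q = 2 • (P * Q) := by
    rw [two_smul, two_smul, Matrix.add_mul]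
  rw [h2PQ, hPQ]
  ext i j
  have hA2Q : (Matrix.of (fun i _ => ζ i) : Matrix (Fin n) (Fin n) ℝ) * Q = 0 := by
    ext a b
    simp only [Matrix.mul_apply, Matrix.of_apply, Matrix.zero_apply]
    rw [← Finset.mul_sum, hQcolsum b, mul_zero]
  have hA1Q : ((Matrix.of (fun _ j => ζ j) : Matrix (Fin n) (Fin n) ℝ) * Q) i j
      = (Q *ᵥ ζ) j := by
    simp only [Matrix.mul_apply, Matrix.of_apply, Matrix.mulVec, dotProduct]
    exact Finset.sum_congr rfl fun k _ => by rw [hQij k j, mul_comm]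
  simp only [Matrix.add_apply, Matrix.sub_apply, Matrix.smul_apply, hA1Q,
    congrFun (congrFun hA2Q i) j, Matrix.zero_apply, add_zero, Matrix.one_apply,
    Matrix.of_apply, hp, Pi.add_apply, Pi.smul_apply, smul_eq_mul, mul_one, hJ]
  by_cases hij : i = j <;> simp [hij, hn0] <;> field_simp <;> ring
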